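/- Let B be a clean bidirected graph rooted at r. Then for every vertex v that is not plain (i.e. for each sign \alpha in {+,-} there exists an r-path ending at v with sign \alpha), the maximum number of internally vertex-disjoint r–v paths in B is 1. -/

import Mathlib

/-- A bidirected graph: a loopless multigraph together with a signing of each
half-edge (edge-endpoint incidence) by a sign (`true` = `+`, `false` = `-`). -/
structure BidirGraph (V : Type) (E : Type) where
  ends : E → V × V
  sign : E → V → Bool
  loopless : ∀ e : E, (ends e).1 ≠ (ends e).2

namespace BidirGraph

variable {V E : Type}

/-- The head of an oriented edge `(e, b)`: `b = true` orients `e` from its first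
endpoint to its second endpoint. -/
def ohead (B : BidirGraph V E) (oe : E × Bool) : V :=
  if oe.2 then (B.ends oe.1).2 else (B.ends oe.1).1

/-- The tail of an oriented edge. -/
def otail (B : BidirGraph V E) (oe : E × Bool) : V :=
  if oe.2 then (B.ends oe.1).1 else (B.ends oe.1).2

/-- `e` is incident with `v`. -/
def Incident (B : BidirGraph V E) (e : E) (v : V) : Prop :=
  (B.ends e).1 = v ∨ (B.ends e).2 = v

/-- `L` is a trail starting at `v`: a sequence of oriented edges, with no repeated
underlying edge, consecutive edges sharing a vertex at which they have opposite signs. -/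
def IsTrailFrom (B : BidirGraph V E) (v : V) (L : List (E × Bool)) : Prop :=
  (L.map Prod.fst).Nodup ∧
  (∀ oe ∈ L.head?, B.otail oe = v) ∧
  L.Chain' (fun a b => B.ohead a = B.otail b ∧ B.sign a.1 (B.ohead a) ≠ B.sign b.1 (B.ohead a))

/-- The final vertex of a trail starting at `v`. -/
def trailEnd (B : BidirGraph V E) (v : V) (L : List (E × Bool)) : V :=
  match L.getLast? with
  | none => v
  | some oe => B.ohead oe

/-- The internal vertices of a trail: the heads of all edges except the last one. -/
def Internal (B : BidirGraph V E) (L : List (E × Bool)) : List V :=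
  (L.map B.ohead).dropLast

/-- An `r`-trail: a trail starting at `r` with no internal vertex equal to `r`. -/
def IsRTrail (B : BidirGraph V E) (r : V) (L : List (E × Bool)) : Prop :=
  B.IsTrailFrom r L ∧ ∀ v ∈ B.Internal L, v ≠ r

/-- The trail `L` ends at vertex `w` with sign `α`. -/
def EndsAtSigned (B : BidirGraph V E) (L : List (E × Bool)) (w : V) (α : Bool) : Prop :=
  ∃ oe, L.getLast? = some oe ∧ B.ohead oe = w ∧ B.sign oe.1 w = α

/-- A path: a trail with no repeated vertex. -/
def IsPathFrom (B : BidirGraph V E) (v : V) (L : List (E × Bool)) : Prop :=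
  B.IsTrailFrom v L ∧ (v :: L.map B.ohead).Nodup

/-- An almost path: a trail that is trivial or becomes a path after removing its last edge. -/
def IsAlmostPathFrom (B : BidirGraph V E) (v : V) (L : List (E × Bool)) : Prop :=
  B.IsTrailFrom v L ∧ (v :: B.Internal L).Nodup

/-- An edge is trail-undirectable if there are `r`-trails ending in both of its orientations. -/
def TrailUndirectable (B : BidirGraph V E) (r : V) (e : E) : Prop :=
  (∃ L, B.IsRTrail r L ∧ L.getLast? = some (e, true)) ∧
  (∃ L, B.IsRTrail r L ∧ L.getLast? = some (e, false))

/-- `(e, b)` is the natural orientation of the trail-directable edge `e`: `r`-trails end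
in the orientation `(e, b)` but not in the opposite orientation. -/
def NatOrient (B : BidirGraph V E) (r : V) (e : E) (b : Bool) : Prop :=
  (∃ L, B.IsRTrail r L ∧ L.getLast? = some (e, b)) ∧
  ¬ ∃ L, B.IsRTrail r L ∧ L.getLast? = some (e, !b)

/-- An edge is trail-directable if exactly one of its orientations is the final oriented
edge of some `r`-trail. -/
def TrailDirectable (B : BidirGraph V E) (r : V) (e : E) : Prop :=
  ∃ b, B.NatOrient r e b

/-- `B` is trail-reachable: every edge is the final edge of some `r`-trail. -/
def TrailReachable (B : BidirGraph V E) (r : V) : Prop :=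
  ∀ e : E, ∃ L b, B.IsRTrail r L ∧ L.getLast? = some (e, b)

/-- Adjacency of trail-undirectable edges: both undirectable and sharing an endpoint. -/
def UStep (B : BidirGraph V E) (r : V) (a b : E) : Prop :=
  B.TrailUndirectable r a ∧ B.TrailUndirectable r b ∧ ∃ v, B.Incident a v ∧ B.Incident b v

/-- `C` is (the edge set of) a nontrivial trail-undirectable component of `B`: the set of
trail-undirectable edges connected to some trail-undirectable edge `e` inside the subgraph
induced by the trail-undirectable edges. -/
def IsUComp (B : BidirGraph V E) (r : V) (C : Set E) : Prop :=
  ∃ e, B.TrailUndirectable r e ∧ C = {f | Relation.ReflTransGen (B.UStep r) e f}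

/-- `v` is a vertex of the edge set `C` (i.e. an endpoint of one of its edges). -/
def VC (B : BidirGraph V E) (C : Set E) (v : V) : Prop :=
  ∃ e ∈ C, B.Incident e v

/-- `B` is edge-clean: the root lies in no nontrivial trail-undirectable component. -/
def EdgeClean (B : BidirGraph V E) (r : V) : Prop :=
  ¬ ∃ C : Set E, B.IsUComp r C ∧ B.VC C r

/-- `B` is clean: there is no nontrivial almost path starting and ending at `r`. -/
def Clean (B : BidirGraph V E) (r : V) : Prop :=
  ¬ ∃ L, L ≠ ([] : List (E × Bool)) ∧ B.IsAlmostPathFrom r L ∧ B.trailEnd r L = r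

/-- A vertex is trail-solid if it is the root, or the head of the natural orientation of a
trail-directable edge, or incident with no trail-undirectable edge. -/
def TrailSolid (B : BidirGraph V E) (r v : V) : Prop :=
  v = r ∨ (∃ e b, B.NatOrient r e b ∧ B.ohead (e, b) = v) ∨
    (∀ e : E, B.Incident e v → ¬ B.TrailUndirectable r e)

/-- Two trails are edge-disjoint if no underlying edge occurs in both. -/
def EdgeDisj (L₁ L₂ : List (E × Bool)) : Prop :=
  ∀ (e : E) (b₁ b₂ : Bool), (e, b₁) ∈ L₁ → (e, b₂) ∈ L₂ → False

/-- Two paths are internally vertex-disjoint if they share no internal vertex. -/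
def IntDisj (B : BidirGraph V E) (L₁ L₂ : List (E × Bool)) : Prop :=
  ∀ w : V, w ∈ B.Internal L₁ → w ∈ B.Internal L₂ → False

end BidirGraph

namespace BidirGraph

variable {V E : Type} {B : BidirGraph V E} {u v w : V}

/-! ### Basic auxiliary lemmas -/

/-- Reverse the orientation of a single oriented edge. -/
def flipE : E × Bool → E × Bool := fun oe => (oe.1, !oe.2)

@[simp] lemma flipE_fst (oe : E × Bool) : (flipE oe).1 = oe.1 := rfl

@[simp] lemma ohead_flipE (oe : E × Bool) : B.ohead (flipE oe) = B.otail oe := by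
  rcases oe with ⟨e, b⟩; cases b <;> simp [ohead, otail, flipE]

@[simp] lemma otail_flipE (oe : E × Bool) : B.otail (flipE oe) = B.ohead oe := by
  rcases oe with ⟨e, b⟩; cases b <;> simp [ohead, otail, flipE]

/-- The step relation between consecutive oriented edges of a trail. -/
def stepRel (B : BidirGraph V E) : (E × Bool) → (E × Bool) → Prop :=
  fun a b => B.ohead a = B.otail b ∧ B.sign a.1 (B.ohead a) ≠ B.sign b.1 (B.ohead a)

lemma isTrailFrom_def {L : List (E × Bool)} :
    B.IsTrailFrom v L ↔ (L.map Prod.fst).Nodup ∧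
      (∀ oe ∈ L.head?, B.otail oe = v) ∧ L.Chain' B.stepRel := Iff.rfl

lemma stepRel_flipE {a b : E × Bool} (h : B.stepRel a b) :
    B.stepRel (flipE b) (flipE a) := by
  obtain ⟨h1, h2⟩ := h
  constructor
  · simp [← h1]
  · simpa [← h1] using h2.symm

lemma ohead_eq_or {e : E} (b b' : Bool) :
    B.ohead (e, b') = B.ohead (e, b) ∨ B.ohead (e, b') = B.otail (e, b) := by
  cases b <;> cases b' <;> simp [ohead, otail]

/-- One endpoint of an oriented edge. -/
lemma trailEnd_eq {L : List (E × Bool)} {oe : E × Bool} (h : L.getLast? = some oe) :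
    B.trailEnd u L = B.ohead oe := by
  simp [trailEnd, h]

@[simp] lemma trailEnd_nil : B.trailEnd u ([] : List (E × Bool)) = u := rfl

lemma IsTrailFrom.tail' {oe : E × Bool} {L : List (E × Bool)}
    (h : B.IsTrailFrom u (oe :: L)) : B.IsTrailFrom (B.ohead oe) L := by
  refine ⟨(List.nodup_cons.mp h.1).2, ?_, h.2.2.tail⟩
  intro b hb
  cases L with
  | nil => simp at hb
  | cons c t =>
    simp only [List.head?_cons, Option.mem_def, Option.some.injEq] at hb
    subst hb
    exact (List.isChain_cons_cons.mp h.2.2).1.1.symm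

lemma map_otail_eq {L : List (E × Bool)} (hT : B.IsTrailFrom u L) (hL : L ≠ []) :
    L.map B.otail = u :: (L.map B.ohead).dropLast := by
  induction L generalizing u with
  | nil => exact absurd rfl hL
  | cons a t ih =>
    have ha : B.otail a = u := hT.2.1 a rfl
    cases t with
    | nil => simp [ha]
    | cons c t' =>
      have := ih hT.tail' (by simp)
      simp only [List.map_cons] at this ⊢
      rw [List.dropLast_cons₂, ha, this]

lemma map_ohead_eq {L : List (E × Bool)} {oe : E × Bool} (h : L.getLast? = some oe) :
    L.map B.ohead = B.Internal L ++ [B.ohead oe] := by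
  have hne : L ≠ [] := by rintro rfl; simp at h
  have hne' : L.map B.ohead ≠ [] := by simp [hne]
  have hlast : (L.map B.ohead).getLast? = some (B.ohead oe) := by
    rw [List.getLast?_map, h]; rfl
  conv_lhs => rw [← List.dropLast_append_getLast hne']
  rw [List.getLast?_eq_getLast hne'] at hlast
  simp only [Option.some.injEq] at hlast
  rw [hlast]; rfl

/-- The reversal of a list of oriented edges. -/
def orev (L : List (E × Bool)) : List (E × Bool) := L.reverse.map flipE

@[simp] lemma orev_nil : orev ([] : List (E × Bool)) = [] := rfl

@[simp] lemma orev_eq_nil {L : List (E × Bool)} : orev L = [] ↔ L = [] := by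
  simp [orev]

@[simp] lemma map_fst_orev (L : List (E × Bool)) :
    (orev L).map Prod.fst = (L.map Prod.fst).reverse := by
  simp [orev, List.map_map]

@[simp] lemma map_ohead_orev (L : List (E × Bool)) :
    (orev L).map B.ohead = (L.map B.otail).reverse := by
  simp only [orev, List.map_map, ← List.map_reverse]
  congr 1; funext oe; exact ohead_flipE oe

@[simp] lemma head?_orev (L : List (E × Bool)) :
    (orev L).head? = L.getLast?.map flipE := by
  simp [orev, List.head?_map, List.head?_reverse]

@[simp] lemma getLast?_orev (L : List (E × Bool)) :
    (orev L).getLast? = L.head?.map flipE := by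
  simp [orev, List.getLast?_map, List.getLast?_reverse]

lemma orev_trail {L : List (E × Bool)} (hT : B.IsTrailFrom u L) :
    B.IsTrailFrom (B.trailEnd u L) (orev L) := by
  refine ⟨by simp [hT.1], ?_, ?_⟩
  · intro oe hoe
    simp only [head?_orev, Option.mem_def, Option.map_eq_some_iff] at hoe
    obtain ⟨a, ha, rfl⟩ := hoe
    rw [otail_flipE, trailEnd_eq ha]
  · show List.IsChain B.stepRel (orev L)
    rw [orev, List.isChain_map, List.isChain_reverse]
    exact hT.2.2.imp fun a b h => stepRel_flipE h

lemma trailEnd_orev {L : List (E × Bool)} (hT : B.IsTrailFrom u L) :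
    B.trailEnd (B.trailEnd u L) (orev L) = u := by
  cases hL : L.head? with
  | none =>
    have : L = [] := by cases L with | nil => rfl | cons a t => simp at hL
    subst this; simp
  | some a =>
    have : (orev L).getLast? = some (flipE a) := by simp [hL]
    rw [trailEnd_eq this, ohead_flipE, hT.2.1 a hL]

lemma IsTrailFrom.append_left {L₁ L₂ : List (E × Bool)}
    (h : B.IsTrailFrom u (L₁ ++ L₂)) : B.IsTrailFrom u L₁ := by
  refine ⟨?_, ?_, ?_⟩
  · have := h.1; rw [List.map_append] at this; exact (List.nodup_append.mp this).1
  · intro oe hoe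
    refine h.2.1 oe ?_
    rw [List.head?_append, hoe]; rfl
  · exact ((List.isChain_append).mp h.2.2).1

lemma IsTrailFrom.append_right {L₁ L₂ : List (E × Bool)}
    (h : B.IsTrailFrom u (L₁ ++ L₂)) : B.IsTrailFrom (B.trailEnd u L₁) L₂ := by
  refine ⟨?_, ?_, ((List.isChain_append).mp h.2.2).2.1⟩
  · have := h.1; rw [List.map_append] at this; exact (List.nodup_append.mp this).2.1
  · intro oe hoe
    cases hL₁ : L₁.getLast? with
    | none =>
      have : L₁ = [] := by
        cases L₁ with | nil => rfl | cons a t => simp [List.getLast?_eq_getLast] at hL₁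
      subst this
      exact h.2.1 oe hoe
    | some a =>
      have hrel := ((List.isChain_append).mp h.2.2).2.2 a hL₁ oe hoe
      rw [trailEnd_eq hL₁, hrel.1]

lemma trail_append {L₁ L₂ : List (E × Bool)}
    (h₁ : B.IsTrailFrom u L₁) (h₂ : B.IsTrailFrom (B.trailEnd u L₁) L₂)
    (hnd : ((L₁ ++ L₂).map Prod.fst).Nodup)
    (hs : ∀ a ∈ L₁.getLast?, ∀ b ∈ L₂.head?,
      B.sign a.1 (B.ohead a) ≠ B.sign b.1 (B.ohead a)) :
    B.IsTrailFrom u (L₁ ++ L₂) := by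
  refine ⟨hnd, ?_, ?_⟩
  · intro oe hoe
    rw [List.head?_append] at hoe
    cases hL₁ : L₁.head? with
    | none =>
      have he : L₁ = [] := by
        cases L₁ with | nil => rfl | cons a t => simp at hL₁
      subst he
      simpa [trailEnd] using h₂.2.1 oe (by simpa using hoe)
    | some a =>
      rw [hL₁] at hoe
      simp only [Option.mem_def, Option.some_or, Option.some.injEq] at hoe
      subst hoe
      exact h₁.2.1 a hL₁
  · show List.IsChain _ (L₁ ++ L₂)
    rw [List.isChain_append]
    refine ⟨h₁.2.2, h₂.2.2, ?_⟩
    intro a ha b hb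
    refine ⟨?_, hs a ha b hb⟩
    rw [← trailEnd_eq ha]
    exact (h₂.2.1 b hb).symm

lemma trailEnd_append (L₁ L₂ : List (E × Bool)) :
    B.trailEnd u (L₁ ++ L₂) = B.trailEnd (B.trailEnd u L₁) L₂ := by
  cases h : L₂.getLast? with
  | none =>
    have : L₂ = [] := by
      cases L₂ with | nil => rfl | cons a t => simp [List.getLast?_eq_getLast] at h
    subst this; simp [trailEnd]
  | some a =>
    have : (L₁ ++ L₂).getLast? = some a := by rw [List.getLast?_append, h]; rfl
    rw [trailEnd_eq this, trailEnd_eq h]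

lemma internal_append {L₁ L₂ : List (E × Bool)} (h : L₂ ≠ []) :
    B.Internal (L₁ ++ L₂) = L₁.map B.ohead ++ B.Internal L₂ := by
  simp only [Internal, List.map_append]
  exact List.dropLast_append_of_ne_nil (by simp [h])

lemma internal_orev {L : List (E × Bool)} (hT : B.IsTrailFrom u L) (hL : L ≠ []) :
    B.Internal (orev L) = (B.Internal L).reverse := by
  simp only [Internal, map_ohead_orev, map_otail_eq hT hL]
  rw [List.reverse_cons, List.dropLast_concat]

/-! ### Splitting, path facts, and the basic "Claim A" contradiction -/

lemma mem_of_getLast?' {α : Type*} {l : List α} {a : α} (h : l.getLast? = some a) :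
    a ∈ l := by
  have : a ∈ l.reverse.head? := by rw [List.head?_reverse]; exact h
  exact List.mem_reverse.mp (List.mem_of_mem_head? this)

lemma split_last {α : Type*} (p : α → Prop) (l : List α) :
    (∀ w ∈ l, ¬ p w) ∨ ∃ l₁ x l₂, l = l₁ ++ x :: l₂ ∧ p x ∧ ∀ w ∈ l₂, ¬ p w := by
  induction l with
  | nil => left; simp
  | cons a t ih =>
    rcases ih with h | ⟨l₁, x, l₂, rfl, hx, hl₂⟩
    · by_cases hp : p a
      · exact Or.inr ⟨[], a, t, rfl, hp, h⟩
      · left; intro w hw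
        rcases List.mem_cons.mp hw with rfl | hw
        · exact hp
        · exact h w hw
    · exact Or.inr ⟨a :: l₁, x, l₂, rfl, hx, hl₂⟩

lemma ohead_mem {L : List (E × Bool)} {oe : E × Bool} (h : oe ∈ L) :
    B.ohead oe ∈ L.map B.ohead := List.mem_map_of_mem h

lemma otail_mem {L : List (E × Bool)} (hT : B.IsTrailFrom u L) {oe : E × Bool}
    (h : oe ∈ L) : B.otail oe ∈ u :: B.Internal L := by
  have hne : L ≠ [] := by rintro rfl; simp at h
  have hm : B.otail oe ∈ L.map B.otail := List.mem_map_of_mem h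
  rwa [map_otail_eq hT hne] at hm

lemma eq_last_of_ohead {L : List (E × Bool)} {oe₀ oe : E × Bool}
    (hnd : (L.map B.ohead).Nodup) (hl : L.getLast? = some oe₀) (hoe : oe ∈ L)
    (hh : B.ohead oe = B.ohead oe₀) : oe = oe₀ :=
  List.inj_on_of_nodup_map hnd hoe (mem_of_getLast?' hl) hh

lemma eq_head_of_otail {L : List (E × Bool)} {oe₀ oe : E × Bool} (hT : B.IsTrailFrom u L)
    (hnd : (u :: B.Internal L).Nodup) (hl : L.head? = some oe₀) (hoe : oe ∈ L)
    (hh : B.otail oe = B.otail oe₀) : oe = oe₀ := by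
  have hne : L ≠ [] := by rintro rfl; simp at hl
  refine List.inj_on_of_nodup_map (f := B.otail) ?_ hoe (List.mem_of_mem_head? hl) hh
  rw [map_otail_eq hT hne]; exact hnd

/-- Standard facts about a path from `r` ending at `v'` (given by its last edge). -/
lemma path_facts {r v' : V} {M : List (E × Bool)} {oe : E × Bool} (hM : B.IsPathFrom r M)
    (hl : M.getLast? = some oe) (hh : B.ohead oe = v') :
    M.map B.ohead = B.Internal M ++ [v'] ∧ (B.Internal M).Nodup ∧ v' ∉ B.Internal M ∧
      r ∉ B.Internal M ∧ v' ≠ r := by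
  have heads : M.map B.ohead = B.Internal M ++ [v'] := by rw [map_ohead_eq hl, hh]
  have hnd : (M.map B.ohead).Nodup := (List.nodup_cons.mp hM.2).2
  have hr : r ∉ M.map B.ohead := (List.nodup_cons.mp hM.2).1
  rw [heads] at hnd hr
  obtain ⟨h1, _, h3⟩ := List.nodup_append'.mp hnd
  exact ⟨heads, h1, fun hv => h3 hv (by simp), fun hr' => hr (List.mem_append_left _ hr'),
    fun h => hr (by simp [h])⟩

lemma closed_contra {r : V} (hclean : B.Clean r) {W : List (E × Bool)} (hW : W ≠ [])
    (ht : B.IsTrailFrom r W) (hnd : (r :: B.Internal W).Nodup)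
    (he : B.trailEnd r W = r) : False :=
  hclean ⟨W, hW, ⟨ht, hnd⟩, he⟩

/-- Claim A: two internally disjoint `r`-paths ending at the same vertex with opposite
signs contradict cleanness. -/
lemma claimA {r v : V} {α : Bool} (hclean : B.Clean r) {M N : List (E × Bool)}
    (hM : B.IsPathFrom r M) (hMe : B.EndsAtSigned M v α)
    (hN : B.IsPathFrom r N) (hNe : B.EndsAtSigned N v (!α))
    (hd : B.IntDisj M N) : False := by
  obtain ⟨oeM, hMl, hMh, hMs⟩ := hMe
  obtain ⟨oeN, hNl, hNh, hNs⟩ := hNe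
  have hMne : M ≠ [] := by rintro rfl; simp at hMl
  have hNne : N ≠ [] := by rintro rfl; simp at hNl
  obtain ⟨headsM, hndM, hvM, hrM, hvr⟩ := path_facts hM hMl hMh
  obtain ⟨headsN, hndN, hvN, hrN, _⟩ := path_facts hN hNl hNh
  -- shared edges are impossible
  have hED : ∀ (e : E) (b₁ b₂ : Bool), (e, b₁) ∈ M → (e, b₂) ∈ N → False := by
    intro e b₁ b₂ h₁ h₂
    have hv1 : B.ohead (e, b₁) ∈ B.Internal M ++ [v] := by
      rw [← headsM]; exact ohead_mem h₁
    rcases List.mem_append.mp hv1 with hi | hvv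
    · rcases ohead_eq_or (B := B) b₂ b₁ with h | h
      · have : B.ohead (e, b₁) ∈ B.Internal N ++ [v] := by
          rw [← headsN, h]; exact ohead_mem h₂
        rcases List.mem_append.mp this with hi' | hvv'
        · exact hd _ hi hi'
        · simp only [List.mem_singleton] at hvv'
          exact hvM (hvv' ▸ hi)
      · have : B.ohead (e, b₁) ∈ r :: B.Internal N := by
          rw [h]; exact otail_mem hN.1 h₂
        rcases List.mem_cons.mp this with hr' | hi'
        · exact hrM (hr' ▸ hi)
        · exact hd _ hi hi'
    · simp only [List.mem_singleton] at hvv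
      have he₁ : (e, b₁) = oeM :=
        eq_last_of_ohead (B := B) ((List.nodup_cons.mp hM.2).2) hMl h₁ (by rw [hvv, hMh])
      -- now show (e, b₂) is the last edge of N as well
      have hv2 : B.ohead (e, b₂) ∈ B.Internal N ++ [v] := by
        rw [← headsN]; exact ohead_mem h₂
      rcases List.mem_append.mp hv2 with hi2 | hvv2
      · rcases ohead_eq_or (B := B) b₁ b₂ with h | h
        · have : B.ohead (e, b₂) ∈ B.Internal M ++ [v] := by
            rw [← headsM, h]; exact ohead_mem h₁
          rcases List.mem_append.mp this with hi' | hvv'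
          · exact hd _ hi' hi2
          · simp only [List.mem_singleton] at hvv'
            exact hvN (hvv' ▸ hi2)
        · have : B.ohead (e, b₂) ∈ r :: B.Internal M := by
            rw [h]; exact otail_mem hM.1 h₁
          rcases List.mem_cons.mp this with hr' | hi'
          · exact hrN (hr' ▸ hi2)
          · exact hd _ hi' hi2
      · simp only [List.mem_singleton] at hvv2
        have he₂ : (e, b₂) = oeN :=
          eq_last_of_ohead (B := B) ((List.nodup_cons.mp hN.2).2) hNl h₂ (by rw [hvv2, hNh])
        have hsM : B.sign e v = α := by rw [← he₁] at hMs; exact hMs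
        have hsN : B.sign e v = !α := by rw [← he₂] at hNs; exact hNs
        rw [hsM] at hsN
        simp at hsN
  -- build the closed almost path
  have hvN' : B.trailEnd r N = v := by rw [trailEnd_eq hNl, hNh]
  have tON : B.IsTrailFrom v (orev N) := by
    have := orev_trail hN.1; rwa [hvN'] at this
  have hWt : B.IsTrailFrom r (M ++ orev N) := by
    refine trail_append hM.1 (by rwa [trailEnd_eq hMl, hMh]) ?_ ?_
    · rw [List.map_append, map_fst_orev]
      refine List.Nodup.append hM.1.1 (List.nodup_reverse.mpr hN.1.1) ?_
      intro e he₁ he₂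
      rw [List.mem_reverse] at he₂
      obtain ⟨a₁, hm₁, he₁'⟩ := List.mem_map.mp he₁
      obtain ⟨a₂, hm₂, he₂'⟩ := List.mem_map.mp he₂
      refine hED e a₁.2 a₂.2 ?_ ?_
      · simpa [← he₁'] using hm₁
      · simpa [← he₂'] using hm₂
    · intro a ha b hb
      rw [hMl] at ha
      rw [head?_orev, hNl] at hb
      simp only [Option.mem_def, Option.some.injEq, Option.map_some] at ha hb
      subst ha; subst hb
      rw [hMh, flipE_fst, hMs, hNs]
      simp
  have hWe : B.trailEnd r (M ++ orev N) = r := by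
    rw [trailEnd_append, trailEnd_eq hMl, hMh, ← hvN']
    rw [hvN']
    have := trailEnd_orev hN.1
    rwa [hvN'] at this
  have hWint : B.Internal (M ++ orev N) =
      (B.Internal M ++ [v]) ++ (B.Internal N).reverse := by
    rw [internal_append (by simp [hNne]), internal_orev hN.1 hNne, headsM]
  refine closed_contra hclean (by simp [hMne]) hWt ?_ hWe
  rw [hWint]
  refine List.nodup_cons.mpr ⟨?_, ?_⟩
  · simp only [List.mem_append, List.mem_singleton, List.mem_reverse]
    rintro ((h | h) | h)
    · exact hrM h
    · exact hvr.symm h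
    · exact hrN h
  · refine List.Nodup.append (List.Nodup.append hndM (by simp) ?_)
      (List.nodup_reverse.mpr hndN) ?_
    · intro a ha ha'
      simp only [List.mem_singleton] at ha'
      exact hvM (ha' ▸ ha)
    · intro a ha ha'
      rw [List.mem_reverse] at ha'
      rcases List.mem_append.mp ha with h | h
      · exact hd _ h ha'
      · simp only [List.mem_singleton] at h
        exact hvN (h ▸ ha')

lemma bool_eq_not {a b : Bool} (h : a ≠ b) : a = !b := by
  cases a <;> cases b <;> simp_all

lemma getLast?_none' {α : Type*} {l : List α} (h : l.getLast? = none) : l = [] := by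
  cases l with
  | nil => rfl
  | cons a t =>
    rw [List.getLast?_eq_getLast (by simp)] at h
    exact absurd h (by simp)

lemma exists_getLast?_of_map {α β : Type*} {f : α → β} {L : List α} {A : List β} {y : β}
    (h : L.map f = A ++ [y]) : ∃ a, L.getLast? = some a ∧ f a = y := by
  cases hl : L.getLast? with
  | none =>
    rw [getLast?_none' hl] at h
    simp at h
  | some a =>
    refine ⟨a, rfl, ?_⟩
    have h2 : (L.map f).getLast? = some (f a) := by rw [List.getLast?_map, hl]; rfl
    rw [h, List.getLast?_concat] at h2
    exact (Option.some.inj h2).symm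

lemma internal_def (L : List (E × Bool)) : B.Internal L = (L.map B.ohead).dropLast := rfl

lemma path_prefix {r : V} {X Y : List (E × Bool)} (h : B.IsPathFrom r (X ++ Y)) :
    B.IsPathFrom r X := by
  refine ⟨h.1.append_left, ?_⟩
  refine List.Nodup.sublist ?_ h.2
  rw [List.map_append]
  exact (List.sublist_append_left _ _).cons₂ r

/-- The key inductive step, in the case where the pivot vertex `x` lies on `L₁`. -/
lemma key_aux {r v x : V} {α : Bool} (hclean : B.Clean r)
    {L₁ L₂ R Q : List (E × Bool)} {l₁ l₂ : List V}
    (hrec : ∀ (w : V) (β : Bool) (A Bp C : List (E × Bool)), C.length < (R ++ Q).length →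
      B.IsPathFrom r A → B.EndsAtSigned A w β → B.IsPathFrom r Bp → B.EndsAtSigned Bp w β →
      B.IntDisj A Bp → B.IsPathFrom r C → B.EndsAtSigned C w (!β) → False)
    (hL₁ : B.IsPathFrom r L₁) (hL₁e : B.EndsAtSigned L₁ v α)
    (hL₂ : B.IsPathFrom r L₂) (hL₂e : B.EndsAtSigned L₂ v α)
    (hd : B.IntDisj L₁ L₂)
    (hP : B.IsPathFrom r (R ++ Q)) (hPe : B.EndsAtSigned (R ++ Q) v (!α))
    (hR : R.map B.ohead = l₁ ++ [x]) (hQ : Q.map B.ohead = l₂ ++ [v])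
    (hx : x ∈ B.Internal L₁)
    (hl₂₁ : ∀ w ∈ l₂, w ∉ B.Internal L₁) (hl₂₂ : ∀ w ∈ l₂, w ∉ B.Internal L₂) : False := by
  classical
  obtain ⟨oe₁, h₁l, h₁h, h₁s⟩ := hL₁e
  obtain ⟨oe₂, h₂l, h₂h, h₂s⟩ := hL₂e
  obtain ⟨oeP, hPl, hPh, hPs⟩ := hPe
  have hL₂ne : L₂ ≠ [] := by rintro rfl; simp at h₂l
  obtain ⟨heads₁, hnd₁, hv₁, hr₁, hvr⟩ := path_facts hL₁ h₁l h₁h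
  obtain ⟨heads₂, hnd₂, hv₂, hr₂, _⟩ := path_facts hL₂ h₂l h₂h
  obtain ⟨headsP, hndP, hvP, hrP, _⟩ := path_facts hP hPl hPh
  have hRne : R ≠ [] := by rintro rfl; simp at hR
  have hQne : Q ≠ [] := by rintro rfl; simp at hQ
  -- internal structure of P
  have hIQ : B.Internal Q = l₂ := by rw [internal_def, hQ, List.dropLast_concat]
  have hIntP : B.Internal (R ++ Q) = (l₁ ++ [x]) ++ l₂ := by
    rw [internal_append hQne, hR, hIQ]
  rw [hIntP] at hvP hrP hndP
  simp only [List.mem_append, List.mem_singleton, not_or] at hvP hrP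
  have hvl₂ : v ∉ l₂ := hvP.2
  have hrl₂ : r ∉ l₂ := hrP.2
  have hxl₂ : x ∉ l₂ := by
    intro hmem
    exact (List.nodup_append'.mp hndP).2.2 (List.mem_append_right _ (by simp)) hmem
  have hndl₂ : l₂.Nodup := (List.nodup_append.mp hndP).2.1
  have hxr : x ≠ r := fun h => hr₁ (h ▸ hx)
  have hxv : x ≠ v := fun h => hv₁ (h ▸ hx)
  have hxI₂ : x ∉ B.Internal L₂ := fun h => hd x hx h
  -- trail structure of P = R ++ Q
  have trailR : B.IsTrailFrom r R := hP.1.append_left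
  obtain ⟨rl, hrl, hrlh⟩ := exists_getLast?_of_map (f := B.ohead) hR
  have hEndR : B.trailEnd r R = x := by rw [trailEnd_eq hrl, hrlh]
  have trailQ : B.IsTrailFrom x Q := by
    have := hP.1.append_right; rwa [hEndR] at this
  obtain ⟨qh, hqh⟩ : ∃ qh, Q.head? = some qh := by
    cases hq : Q.head? with
    | none => cases Q with
      | nil => exact absurd rfl hQne
      | cons c t => simp at hq
    | some a => exact ⟨a, rfl⟩
  have hqt : B.otail qh = x := trailQ.2.1 qh hqh
  obtain ⟨ql, hql, hqlh⟩ := exists_getLast?_of_map (f := B.ohead) hQ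
  have hEndQ : B.trailEnd x Q = v := by rw [trailEnd_eq hql, hqlh]
  have hqlP : ql = oeP := by
    have h2 : (R ++ Q).getLast? = some ql := by rw [List.getLast?_append, hql]; rfl
    exact Option.some.inj (h2.symm.trans hPl)
  have hqls : B.sign ql.1 v = !α := by rw [hqlP]; exact hPs
  have hsgnRQ : B.sign rl.1 x ≠ B.sign qh.1 x := by
    have hj := (List.isChain_append.mp hP.1.2.2).2.2 rl hrl qh hqh
    have := hj.2; rwa [hrlh] at this
  have hndQheads : (Q.map B.ohead).Nodup := by
    rw [hQ]
    exact List.Nodup.append hndl₂ (by simp) (fun w hw hw' => hvl₂ ((List.mem_singleton.mp hw') ▸ hw))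
  have hndQverts : (x :: B.Internal Q).Nodup := by
    rw [hIQ]; exact List.nodup_cons.mpr ⟨hxl₂, hndl₂⟩
  -- decompose L₁ at x
  obtain ⟨a, b, hab⟩ := List.mem_iff_append.mp hx
  have hheads₁ : L₁.map B.ohead = (a ++ [x]) ++ (b ++ [v]) := by
    rw [heads₁, hab]; simp
  obtain ⟨A, A', hL₁split, hA, hA'⟩ := List.map_eq_append_iff.mp hheads₁
  have hAne : A ≠ [] := by rintro rfl; simp at hA
  obtain ⟨aL, haL, haLh⟩ := exists_getLast?_of_map (f := B.ohead) hA
  have hEndA : B.trailEnd r A = x := by rw [trailEnd_eq haL, haLh]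
  have pathA : B.IsPathFrom r A := path_prefix (by rw [← hL₁split]; exact hL₁)
  have trailA : B.IsTrailFrom r A := pathA.1
  have hIA : B.Internal A = a := by rw [internal_def, hA, List.dropLast_concat]
  have haI₁ : ∀ w ∈ a, w ∈ B.Internal L₁ := by
    intro w hw; rw [hab]; exact List.mem_append_left _ hw
  have hxa : x ∉ a := by
    intro hmem
    have := hab ▸ hnd₁
    exact (List.nodup_append'.mp this).2.2 hmem (by simp)
  have hnda : a.Nodup := by
    have := hab ▸ hnd₁
    exact (List.nodup_append.mp this).1
  have hndAheads : (A.map B.ohead).Nodup := by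
    rw [hA]
    exact List.Nodup.append hnda (by simp) (fun w hw hw' => hxa ((List.mem_singleton.mp hw') ▸ hw))
  -- edge-disjointness of L₂ and Q
  have hED₂Q : ∀ (e : E) (b₁ b₂ : Bool), (e, b₁) ∈ L₂ → (e, b₂) ∈ Q → False := by
    intro e b₁ b₂ h₁ h₂
    have hh₂ : B.ohead (e, b₂) ∈ l₂ ++ [v] := by rw [← hQ]; exact ohead_mem h₂
    rcases List.mem_append.mp hh₂ with hi | hvv
    · rcases ohead_eq_or (B := B) b₁ b₂ with h | h
      · have hmem : B.ohead (e, b₂) ∈ B.Internal L₂ ++ [v] := by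
          rw [← heads₂, h]; exact ohead_mem h₁
        rcases List.mem_append.mp hmem with hi' | hv'
        · exact hl₂₂ _ hi hi'
        · exact hvl₂ ((List.mem_singleton.mp hv') ▸ hi)
      · have hmem : B.ohead (e, b₂) ∈ r :: B.Internal L₂ := by
          rw [h]; exact otail_mem hL₂.1 h₁
        rcases List.mem_cons.mp hmem with hr' | hi'
        · exact hrl₂ (hr' ▸ hi)
        · exact hl₂₂ _ hi hi'
    · rw [List.mem_singleton] at hvv
      have he₂ : (e, b₂) = ql :=
        eq_last_of_ohead (B := B) hndQheads hql h₂ (by rw [hvv, hqlh])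
      rcases ohead_eq_or (B := B) b₂ b₁ with h | h
      · have he₁ : (e, b₁) = oe₂ :=
          eq_last_of_ohead (B := B) ((List.nodup_cons.mp hL₂.2).2) h₂l h₁
            (by rw [h, hvv, h₂h])
        have hs1 : B.sign e v = α := by rw [← he₁] at h₂s; exact h₂s
        have hs2 : B.sign e v = !α := by rw [← he₂] at hqls; exact hqls
        rw [hs1] at hs2; simp at hs2
      · have hmem : B.ohead (e, b₁) ∈ x :: B.Internal Q := by
          rw [h]; exact otail_mem trailQ h₂
        have hmem2 : B.ohead (e, b₁) ∈ B.Internal L₂ ++ [v] := by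
          rw [← heads₂]; exact ohead_mem h₁
        rw [hIQ] at hmem
        rcases List.mem_cons.mp hmem with hh | hh
        · rcases List.mem_append.mp hmem2 with hi' | hv'
          · exact hxI₂ (hh ▸ hi')
          · exact hxv (hh.symm.trans (List.mem_singleton.mp hv'))
        · rcases List.mem_append.mp hmem2 with hi' | hv'
          · exact hl₂₂ _ hh hi'
          · exact hvl₂ ((List.mem_singleton.mp hv') ▸ hh)
  -- the reversed suffix
  have tOQ : B.IsTrailFrom v (orev Q) := by
    have := orev_trail trailQ; rwa [hEndQ] at this
  have hEndOQ : B.trailEnd v (orev Q) = x := by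
    have := trailEnd_orev trailQ; rwa [hEndQ] at this
  have hOQheads : (orev Q).map B.ohead = l₂.reverse ++ [x] := by
    rw [map_ohead_orev, map_otail_eq trailQ hQne]
    rw [show (Q.map B.ohead).dropLast = l₂ by rw [hQ, List.dropLast_concat]]
    exact List.reverse_cons
  have hheadOQ : (orev Q).head? = some (flipE ql) := by rw [head?_orev, hql]; rfl
  have hlastOQ : (orev Q).getLast? = some (flipE qh) := by rw [getLast?_orev, hqh]; rfl
  by_cases hgs : B.sign qh.1 x = B.sign aL.1 x
  · -- bad case: recurse on the prefix R
    have hndBp : (((L₂ ++ orev Q)).map Prod.fst).Nodup := by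
      rw [List.map_append, map_fst_orev]
      refine List.Nodup.append hL₂.1.1 (List.nodup_reverse.mpr trailQ.1) ?_
      intro e he₁ he₂
      rw [List.mem_reverse] at he₂
      obtain ⟨a₁, hm₁, he₁'⟩ := List.mem_map.mp he₁
      obtain ⟨a₂, hm₂, he₂'⟩ := List.mem_map.mp he₂
      refine hED₂Q e a₁.2 a₂.2 ?_ ?_
      · simpa [← he₁'] using hm₁
      · simpa [← he₂'] using hm₂
    have trailBp : B.IsTrailFrom r (L₂ ++ orev Q) := by
      refine trail_append hL₂.1 (by rwa [trailEnd_eq h₂l, h₂h]) hndBp ?_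
      intro a' ha' b' hb'
      rw [h₂l] at ha'; rw [hheadOQ] at hb'
      simp only [Option.mem_def, Option.some.injEq] at ha' hb'
      subst ha'; subst hb'
      rw [h₂h, flipE_fst, h₂s, hqls]
      simp
    have hlastBp : (L₂ ++ orev Q).getLast? = some (flipE qh) := by
      rw [List.getLast?_append, hlastOQ]; rfl
    have endsBp : B.EndsAtSigned (L₂ ++ orev Q) x (B.sign aL.1 x) :=
      ⟨flipE qh, hlastBp, by rw [ohead_flipE, hqt], by rw [flipE_fst]; exact hgs⟩
    have pathBp : B.IsPathFrom r (L₂ ++ orev Q) := by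
      refine ⟨trailBp, ?_⟩
      rw [List.map_append, hOQheads, heads₂]
      refine List.nodup_cons.mpr ⟨?_, ?_⟩
      · simp only [List.mem_append, List.mem_singleton, List.mem_reverse, not_or]
        exact ⟨⟨hr₂, hvr.symm⟩, hrl₂, fun h => hxr h.symm⟩
      · refine List.Nodup.append (List.Nodup.append hnd₂ (by simp)
          (fun w hw hw' => hv₂ ((List.mem_singleton.mp hw') ▸ hw)))
          (List.Nodup.append (List.nodup_reverse.mpr hndl₂) (by simp)
            (fun w hw hw' => hxl₂ ((List.mem_singleton.mp hw') ▸ (List.mem_reverse.mp hw)))) ?_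
        intro w hw hw'
        rcases List.mem_append.mp hw with h | h
        · rcases List.mem_append.mp hw' with h' | h'
          · exact hl₂₂ _ (List.mem_reverse.mp h') h
          · exact hxI₂ ((List.mem_singleton.mp h') ▸ h)
        · rw [List.mem_singleton] at h
          rcases List.mem_append.mp hw' with h' | h'
          · exact hvl₂ (h ▸ (List.mem_reverse.mp h'))
          · exact hxv ((h ▸ (List.mem_singleton.mp h')).symm)
    have hIOQ : B.Internal (orev Q) = l₂.reverse := by
      rw [internal_def, hOQheads, List.dropLast_concat]
    have hIBp : B.Internal (L₂ ++ orev Q) = (B.Internal L₂ ++ [v]) ++ l₂.reverse := by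
      rw [internal_append (by simp [hQne]), heads₂, hIOQ]
    have hdisjABp : B.IntDisj A (L₂ ++ orev Q) := by
      intro w hwA hwB
      rw [hIA] at hwA; rw [hIBp] at hwB
      have hwI₁ : w ∈ B.Internal L₁ := haI₁ w hwA
      rcases List.mem_append.mp hwB with h | h
      · rcases List.mem_append.mp h with h' | h'
        · exact hd w hwI₁ h'
        · exact hv₁ ((List.mem_singleton.mp h') ▸ hwI₁)
      · exact hl₂₁ w (List.mem_reverse.mp h) hwI₁
    have endsA : B.EndsAtSigned A x (B.sign aL.1 x) := ⟨aL, haL, haLh, rfl⟩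
    have pathR : B.IsPathFrom r R := path_prefix hP
    have endsR : B.EndsAtSigned R x (!(B.sign aL.1 x)) := by
      refine ⟨rl, hrl, hrlh, ?_⟩
      rw [hgs] at hsgnRQ
      exact bool_eq_not hsgnRQ
    have hlen : R.length < (R ++ Q).length := by
      rw [List.length_append]
      have := List.length_pos_iff.mpr hQne
      omega
    exact hrec x (B.sign aL.1 x) A (L₂ ++ orev Q) R hlen pathA endsA pathBp endsBp
      hdisjABp pathR endsR
  · -- good case: build a closed almost path and contradict cleanness
    have tOA : B.IsTrailFrom x (orev A) := by
      have := orev_trail trailA; rwa [hEndA] at this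
    have hEndOA : B.trailEnd x (orev A) = r := by
      have := trailEnd_orev trailA; rwa [hEndA] at this
    have hheadOA : (orev A).head? = some (flipE aL) := by rw [head?_orev, haL]; rfl
    have haIm : ∀ w ∈ A.map B.ohead, w ∈ B.Internal L₁ := by
      intro w hw
      rw [hA] at hw
      rcases List.mem_append.mp hw with h | h
      · exact haI₁ w h
      · exact (List.mem_singleton.mp h) ▸ hx
    -- edge-disjointness of L₂ and A
    have hED₂A : ∀ (e : E) (b₁ b₂ : Bool), (e, b₁) ∈ L₂ → (e, b₂) ∈ A → False := by
      intro e b₁ b₂ h₁ h₂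
      have hh₂ : B.ohead (e, b₂) ∈ B.Internal L₁ := haIm _ (ohead_mem h₂)
      rcases ohead_eq_or (B := B) b₁ b₂ with h | h
      · have hmem : B.ohead (e, b₂) ∈ B.Internal L₂ ++ [v] := by
          rw [← heads₂, h]; exact ohead_mem h₁
        rcases List.mem_append.mp hmem with h' | h'
        · exact hd _ hh₂ h'
        · exact hv₁ ((List.mem_singleton.mp h') ▸ hh₂)
      · have hmem : B.ohead (e, b₂) ∈ r :: B.Internal L₂ := by
          rw [h]; exact otail_mem hL₂.1 h₁
        rcases List.mem_cons.mp hmem with h' | h'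
        · exact hr₁ (h' ▸ hh₂)
        · exact hd _ hh₂ h'
    -- edge-disjointness of Q and A
    have hEDQA : ∀ (e : E) (b₁ b₂ : Bool), (e, b₁) ∈ Q → (e, b₂) ∈ A → False := by
      intro e b₁ b₂ h₁ h₂
      have hh₂ : B.ohead (e, b₂) ∈ B.Internal L₁ := haIm _ (ohead_mem h₂)
      rcases ohead_eq_or (B := B) b₁ b₂ with h | h
      · have hmem : B.ohead (e, b₂) ∈ l₂ ++ [v] := by
          rw [← hQ, h]; exact ohead_mem h₁
        rcases List.mem_append.mp hmem with h' | h'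
        · exact hl₂₁ _ h' hh₂
        · exact hv₁ ((List.mem_singleton.mp h') ▸ hh₂)
      · have hmem : B.ohead (e, b₂) ∈ x :: B.Internal Q := by
          rw [h]; exact otail_mem trailQ h₁
        rw [hIQ] at hmem
        rcases List.mem_cons.mp hmem with h' | h'
        · -- ohead (e,b₂) = x : identify both edges
          have he₂ : (e, b₂) = aL :=
            eq_last_of_ohead (B := B) hndAheads haL h₂ (by rw [h', haLh])
          have he₁ : (e, b₁) = qh := by
            refine eq_head_of_otail trailQ hndQverts hqh h₁ ?_
            rw [hqt, ← h, h']
          apply hgs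
          rw [← he₁, ← he₂]
        · exact hl₂₁ _ h' hh₂
    -- assemble the closed almost path W = L₂ ++ (orev Q ++ orev A)
    have hndQA : ((orev Q ++ orev A).map Prod.fst).Nodup := by
      rw [List.map_append, map_fst_orev, map_fst_orev]
      refine List.Nodup.append (List.nodup_reverse.mpr trailQ.1)
        (List.nodup_reverse.mpr trailA.1) ?_
      intro e he₁ he₂
      rw [List.mem_reverse] at he₁ he₂
      obtain ⟨a₁, hm₁, he₁'⟩ := List.mem_map.mp he₁
      obtain ⟨a₂, hm₂, he₂'⟩ := List.mem_map.mp he₂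
      refine hEDQA e a₁.2 a₂.2 ?_ ?_
      · simpa [← he₁'] using hm₁
      · simpa [← he₂'] using hm₂
    have T1 : B.IsTrailFrom v (orev Q ++ orev A) := by
      refine trail_append tOQ (by rwa [hEndOQ]) hndQA ?_
      intro a' ha' b' hb'
      rw [hlastOQ] at ha'; rw [hheadOA] at hb'
      simp only [Option.mem_def, Option.some.injEq] at ha' hb'
      subst ha'; subst hb'
      rw [ohead_flipE, hqt, flipE_fst, flipE_fst]
      exact hgs
    have hEndT1 : B.trailEnd v (orev Q ++ orev A) = r := by
      rw [trailEnd_append, hEndOQ, hEndOA]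
    have hndW : ((L₂ ++ (orev Q ++ orev A)).map Prod.fst).Nodup := by
      rw [List.map_append]
      refine List.Nodup.append hL₂.1.1 hndQA ?_
      intro e he₁ he₂
      obtain ⟨a₁, hm₁, he₁'⟩ := List.mem_map.mp he₁
      rw [List.map_append, List.mem_append, map_fst_orev, map_fst_orev] at he₂
      rcases he₂ with he₂ | he₂ <;> rw [List.mem_reverse] at he₂ <;>
        obtain ⟨a₂, hm₂, he₂'⟩ := List.mem_map.mp he₂
      · refine hED₂Q e a₁.2 a₂.2 ?_ ?_
        · simpa [← he₁'] using hm₁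
        · simpa [← he₂'] using hm₂
      · refine hED₂A e a₁.2 a₂.2 ?_ ?_
        · simpa [← he₁'] using hm₁
        · simpa [← he₂'] using hm₂
    have hheadQA : (orev Q ++ orev A).head? = some (flipE ql) := by
      rw [List.head?_append, hheadOQ]; rfl
    have trailW : B.IsTrailFrom r (L₂ ++ (orev Q ++ orev A)) := by
      refine trail_append hL₂.1 (by rwa [trailEnd_eq h₂l, h₂h]) hndW ?_
      intro a' ha' b' hb'
      rw [h₂l] at ha'; rw [hheadQA] at hb'
      simp only [Option.mem_def, Option.some.injEq] at ha' hb'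
      subst ha'; subst hb'
      rw [h₂h, flipE_fst, h₂s, hqls]
      simp
    have hEndW : B.trailEnd r (L₂ ++ (orev Q ++ orev A)) = r := by
      rw [trailEnd_append, trailEnd_eq h₂l, h₂h, hEndT1]
    have hIOA : B.Internal (orev A) = a.reverse := by
      rw [internal_orev trailA hAne, hIA]
    have hIW : B.Internal (L₂ ++ (orev Q ++ orev A)) =
        (B.Internal L₂ ++ [v]) ++ ((l₂.reverse ++ [x]) ++ a.reverse) := by
      rw [internal_append (by simp [hAne]), internal_append (by simp [hAne]),
        heads₂, hOQheads, hIOA]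
    refine closed_contra hclean (by simp [hL₂ne]) trailW ?_ hEndW
    rw [hIW]
    refine List.nodup_cons.mpr ⟨?_, ?_⟩
    · simp only [List.mem_append, List.mem_singleton, List.mem_reverse, not_or]
      exact ⟨⟨hr₂, hvr.symm⟩, ⟨hrl₂, fun h => hxr h.symm⟩, fun h => hr₁ (haI₁ _ h)⟩
    · refine List.Nodup.append (List.Nodup.append hnd₂ (by simp)
        (fun w hw hw' => hv₂ ((List.mem_singleton.mp hw') ▸ hw))) ?_ ?_
      · refine List.Nodup.append (List.Nodup.append (List.nodup_reverse.mpr hndl₂) (by simp)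
          (fun w hw hw' => hxl₂ ((List.mem_singleton.mp hw') ▸ (List.mem_reverse.mp hw))))
          (List.nodup_reverse.mpr hnda) ?_
        intro w hw hw'
        rw [List.mem_reverse] at hw'
        have hwI₁ : w ∈ B.Internal L₁ := haI₁ _ hw'
        rcases List.mem_append.mp hw with h | h
        · exact hl₂₁ _ (List.mem_reverse.mp h) hwI₁
        · exact hxa ((List.mem_singleton.mp h) ▸ hw')
      · intro w hw hw'
        have hwv : w ∈ B.Internal L₂ ∨ w = v := by
          rcases List.mem_append.mp hw with h | h
          · exact Or.inl h
          · exact Or.inr (List.mem_singleton.mp h)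
        rcases List.mem_append.mp hw' with h' | h'
        · rcases List.mem_append.mp h' with h'' | h''
          · rw [List.mem_reverse] at h''
            rcases hwv with h3 | h3
            · exact hl₂₂ _ h'' h3
            · exact hvl₂ (h3 ▸ h'')
          · rw [List.mem_singleton] at h''
            rcases hwv with h3 | h3
            · exact hxI₂ (h'' ▸ h3)
            · exact hxv (h'' ▸ h3)
        · rw [List.mem_reverse] at h'
          have hwI₁ : w ∈ B.Internal L₁ := haI₁ _ h'
          rcases hwv with h3 | h3
          · exact hd _ hwI₁ h3
          · exact hv₁ (h3 ▸ hwI₁)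

/-- The main lemma: two internally disjoint `r`–`v` paths with the same sign at `v`,
together with an `r`-path of the opposite sign at `v`, contradict cleanness. -/
lemma key {r : V} (hclean : B.Clean r) :
    ∀ n (P L₁ L₂ : List (E × Bool)) (v : V) (α : Bool), P.length ≤ n →
      B.IsPathFrom r L₁ → B.EndsAtSigned L₁ v α →
      B.IsPathFrom r L₂ → B.EndsAtSigned L₂ v α →
      B.IntDisj L₁ L₂ → B.IsPathFrom r P → B.EndsAtSigned P v (!α) → False := by
  intro n
  induction n with
  | zero =>
    intro P L₁ L₂ v α hlen _ _ _ _ _ _ hPe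
    obtain ⟨oe, hoe, -, -⟩ := hPe
    rw [List.length_eq_zero_iff.mp (Nat.le_zero.mp hlen)] at hoe
    simp at hoe
  | succ n ih =>
    intro P L₁ L₂ v α hlen hL₁ hL₁e hL₂ hL₂e hd hP hPe
    obtain ⟨oeP, hPl, hPh, hPs⟩ := hPe
    have headsP : P.map B.ohead = B.Internal P ++ [v] := (path_facts hP hPl hPh).1
    rcases split_last (fun w => w ∈ B.Internal L₁ ∨ w ∈ B.Internal L₂) (B.Internal P)
      with hcl | ⟨l₁, x, l₂, hsplit, hpx, hl₂⟩
    · exact claimA hclean hL₁ hL₁e hP ⟨oeP, hPl, hPh, hPs⟩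
        (fun w h1 h2 => hcl w h2 (Or.inl h1))
    · have hheads : P.map B.ohead = (l₁ ++ [x]) ++ (l₂ ++ [v]) := by
        rw [headsP, hsplit]; simp
      obtain ⟨R, Q, hPRQ, hR, hQ⟩ := List.map_eq_append_iff.mp hheads
      subst hPRQ
      rw [List.length_append] at hlen
      have hrec : ∀ (w : V) (β : Bool) (A Bp C : List (E × Bool)),
          C.length < (R ++ Q).length → B.IsPathFrom r A → B.EndsAtSigned A w β →
          B.IsPathFrom r Bp → B.EndsAtSigned Bp w β → B.IntDisj A Bp →
          B.IsPathFrom r C → B.EndsAtSigned C w (!β) → False := by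
        intro w β A Bp C hlt hA hAe hBp hBpe hdab hC hCe
        rw [List.length_append] at hlt
        exact ih C A Bp w β (by omega) hA hAe hBp hBpe hdab hC hCe
      rcases hpx with hx | hx
      · exact key_aux hclean hrec hL₁ hL₁e hL₂ hL₂e hd hP ⟨oeP, hPl, hPh, hPs⟩ hR hQ hx
          (fun w hw h => hl₂ w hw (Or.inl h)) (fun w hw h => hl₂ w hw (Or.inr h))
      · exact key_aux hclean hrec hL₂ hL₂e hL₁ hL₁e (fun w h1 h2 => hd w h2 h1) hP
          ⟨oeP, hPl, hPh, hPs⟩ hR hQ hx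
          (fun w hw h => hl₂ w hw (Or.inr h)) (fun w hw h => hl₂ w hw (Or.inl h))

end BidirGraph

open BidirGraph in
/-- in a clean rooted bidirected graph, every non-plain vertex `v` (both
signs of `v` are reachable by `r`-paths) has exactly one internally vertex-disjoint
`r`–`v` path as the maximum: some `r`–`v` path exists, and no two distinct `r`–`v`
paths are internally vertex-disjoint. -/
theorem stmt14 {V E : Type} (B : BidirGraph V E) (r : V)
    (hclean : B.Clean r) (v : V)
    (hv : ∀ α : Bool, ∃ L, B.IsPathFrom r L ∧ B.EndsAtSigned L v α) :
    (∃ L, B.IsPathFrom r L ∧ B.trailEnd r L = v) ∧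
      ∀ L₁ L₂, (B.IsPathFrom r L₁ ∧ B.trailEnd r L₁ = v) →
        (B.IsPathFrom r L₂ ∧ B.trailEnd r L₂ = v) →
        L₁ ≠ L₂ → ¬ B.IntDisj L₁ L₂ := by
  obtain ⟨L₀, hL₀p, oe₀, hl₀, hh₀, -⟩ := hv true
  have hvr : v ≠ r := (path_facts hL₀p hl₀ hh₀).2.2.2.2
  constructor
  · exact ⟨L₀, hL₀p, by rw [trailEnd_eq hl₀, hh₀]⟩
  · rintro L₁ L₂ ⟨h₁p, h₁e⟩ ⟨h₂p, h₂e⟩ hne hdisj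
    have hn₁ : L₁ ≠ [] := by rintro rfl; exact hvr h₁e.symm
    have hn₂ : L₂ ≠ [] := by rintro rfl; exact hvr h₂e.symm
    obtain ⟨oe₁, hl₁⟩ : ∃ oe, L₁.getLast? = some oe := by
      cases h : L₁.getLast? with
      | none => exact absurd (getLast?_none' h) hn₁
      | some a => exact ⟨a, rfl⟩
    obtain ⟨oe₂, hl₂⟩ : ∃ oe, L₂.getLast? = some oe := by
      cases h : L₂.getLast? with
      | none => exact absurd (getLast?_none' h) hn₂
      | some a => exact ⟨a, rfl⟩
    have hh₁ : B.ohead oe₁ = v := (trailEnd_eq hl₁).symm.trans h₁e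
    have hh₂ : B.ohead oe₂ = v := (trailEnd_eq hl₂).symm.trans h₂e
    have E₁ : B.EndsAtSigned L₁ v (B.sign oe₁.1 v) := ⟨oe₁, hl₁, hh₁, rfl⟩
    by_cases hα : B.sign oe₂.1 v = B.sign oe₁.1 v
    · obtain ⟨P, hPp, hPe⟩ := hv (!(B.sign oe₁.1 v))
      exact key hclean P.length P L₁ L₂ v _ le_rfl h₁p E₁ h₂p ⟨oe₂, hl₂, hh₂, hα⟩
        hdisj hPp hPe
    · exact claimA hclean h₁p E₁ h₂p ⟨oe₂, hl₂, hh₂, bool_eq_not hα⟩ hdisj
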